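/- Let A be a unital *-algebra, (Λ^•, d) an n-dimensional differential calculus whose top module Λ^n is free of rank 1 with basis τ, and suppose each Λ^k is a self-dual right A-module with Hermitian structure (·,·)_k. Then for each k there exists a unique linear map ∗_H : Λ^k → Λ^{n−k} satisfying τ·(∗_H α, β)_{n−k} = α* ∧ β for all α ∈ Λ^k, β ∈ Λ^{n−k}. -/

import Mathlib

open MulOpposite

/-- Proposition (existence and uniqueness of the Hodge operator): for an
`n`-dimensional differential calculus whose top module `Λⁿ` is free of rank one
with basis (volume form) `τ`, and whose `Λ^{n−k}` is a self-dual right `A`-module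
with Hermitian structure `inn`, there is a unique linear map `∗_H : Λ^k → Λ^{n−k}`
with `τ·(∗_H α, β)_{n−k} = α* ∧ β` for all `α ∈ Λ^k`, `β ∈ Λ^{n−k}`. -/
theorem stmt_3 {A : Type*} [Ring A] [StarRing A] [PartialOrder A] [Algebra ℂ A]
    {Λk ΛnK Λn : Type*}
    [AddCommGroup Λk] [Module ℂ Λk]
    [AddCommGroup ΛnK] [Module ℂ ΛnK] [Module Aᵐᵒᵖ ΛnK] [SMulCommClass ℂ Aᵐᵒᵖ ΛnK]
    [AddCommGroup Λn] [Module ℂ Λn] [Module Aᵐᵒᵖ Λn] [SMulCommClass ℂ Aᵐᵒᵖ Λn]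
    -- the graded involution `α ↦ α*` on `Λ^k`
    (starK : Λk → Λk)
    (hstarK_add : ∀ x y, starK (x + y) = starK x + starK y)
    (hstarK_smul : ∀ (c : ℂ) x, starK (c • x) = (starRingEnd ℂ c) • starK x)
    -- the wedge product `Λ^k × Λ^{n−k} → Λ^n`
    (wedge : Λk → ΛnK → Λn)
    (hw_addl : ∀ x x' y, wedge (x + x') y = wedge x y + wedge x' y)
    (hw_addr : ∀ x y y', wedge x (y + y') = wedge x y + wedge x y')
    (hw_smull : ∀ (c : ℂ) x y, wedge (c • x) y = c • wedge x y)
    (hw_rlin : ∀ x y (a : A), wedge x (op a • y) = op a • wedge x y)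
    -- the Hermitian structure on `Λ^{n−k}`
    (inn : ΛnK → ΛnK → A)
    (hinn_addl : ∀ η η' β, inn (η + η') β = inn η β + inn η' β)
    (hinn_addr : ∀ η β β', inn η (β + β') = inn η β + inn η β')
    (hinn_smull : ∀ (c : ℂ) η β,
      inn (c • η) β = algebraMap ℂ A (starRingEnd ℂ c) * inn η β)
    (hinn_rlin : ∀ η β (a : A), inn η (op a • β) = inn η β * a)
    (hinn_herm : ∀ η β, star (inn η β) = inn β η)
    (hinn_pos : ∀ η, η ≠ 0 → 0 < inn η η)
    -- `Λ^n` is free of rank one with basis `τ`, on which `ℂ` acts through `A`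
    (τ : Λn)
    (hfree : ∀ ωn : Λn, ∃! a : A, ωn = op a • τ)
    (hscal : ∀ (c : ℂ) (m : Λn), c • m = op (algebraMap ℂ A c) • m)
    -- `Λ^{n−k}` is self-dual
    (hsd : ∀ T : ΛnK → A, (∀ y y', T (y + y') = T y + T y') →
      (∀ y (a : A), T (op a • y) = T y * a) → ∃ η, ∀ β, T β = inn η β) :
    ∃! H : Λk →ₗ[ℂ] ΛnK,
      ∀ (α : Λk) (β : ΛnK), op (inn (H α) β) • τ = wedge (starK α) β := by
  classical
  -- coefficient map for the free rank-one module Λⁿ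
  have c_ex : ∀ ω : Λn, ∃ a : A, ω = op a • τ := fun ω => (hfree ω).exists
  set c : Λn → A := fun ω => (c_ex ω).choose with hc_def
  have hc : ∀ ω, ω = op (c ω) • τ := fun ω => (c_ex ω).choose_spec
  have hc_uniq : ∀ (ω) (a : A), ω = op a • τ → a = c ω := by
    intro ω a ha
    exact (hfree ω).unique ha (hc ω)
  have hc_add : ∀ ω ω', c (ω + ω') = c ω + c ω' := by
    intro ω ω'
    refine (hc_uniq _ _ ?_).symm
    rw [op_add, add_smul, ← hc, ← hc]
  have hc_mul : ∀ (ω) (a : A), c (op a • ω) = c ω * a := by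
    intro ω a
    refine (hc_uniq _ _ ?_).symm
    rw [op_mul, mul_smul, ← hc]
  have hc_scal : ∀ (d : ℂ) (ω), c (d • ω) = c ω * algebraMap ℂ A d := by
    intro d ω
    rw [hscal, hc_mul]
  -- basic consequences of the Hermitian structure
  have inn_zero : ∀ β, inn 0 β = 0 := by
    intro β
    have h := hinn_addl 0 0 β
    rw [add_zero] at h
    exact (left_eq_add.mp h)
  have inn_sub : ∀ η η' β, inn (η - η') β = inn η β - inn η' β := by
    intro η η' β
    have h := hinn_addl (η - η') η' β
    rw [sub_add_cancel] at h
    rw [h, add_sub_cancel_right]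
  have key : ∀ η η' : ΛnK, (∀ β, inn η β = inn η' β) → η = η' := by
    intro η η' h
    by_contra hne
    have hpos := hinn_pos (η - η') (sub_ne_zero.mpr hne)
    have hzero : inn (η - η') (η - η') = 0 := by
      rw [inn_sub, h, sub_self]
    rw [hzero] at hpos
    exact lt_irrefl _ hpos
  -- construct the Hodge operator pointwise via self-duality
  have hex : ∀ α : Λk, ∃ η, ∀ β, c (wedge (starK α) β) = inn η β := by
    intro α
    refine hsd (fun β => c (wedge (starK α) β)) ?_ ?_
    · intro y y'; rw [hw_addr, hc_add]
    · intro y a; rw [hw_rlin, hc_mul]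
  set H0 : Λk → ΛnK := fun α => (hex α).choose with hH0_def
  have hH0 : ∀ α β, c (wedge (starK α) β) = inn (H0 α) β :=
    fun α => (hex α).choose_spec
  have hH0add : ∀ α α', H0 (α + α') = H0 α + H0 α' := by
    intro α α'
    apply key
    intro β
    rw [← hH0, hstarK_add, hw_addl, hc_add, hH0, hH0, hinn_addl]
  have hH0smul : ∀ (d : ℂ) α, H0 (d • α) = d • H0 α := by
    intro d α
    apply key
    intro β
    rw [← hH0, hstarK_smul, hw_smull, hc_scal, hH0, hinn_smull,
      Algebra.commutes]
  refine ⟨⟨⟨H0, hH0add⟩, hH0smul⟩, ?_, ?_⟩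
  · intro α β
    show op (inn (H0 α) β) • τ = wedge (starK α) β
    rw [← hH0]
    exact (hc _).symm
  · intro H' hH'
    ext α
    show H' α = H0 α
    apply key
    intro β
    have h1 : inn (H' α) β = c (wedge (starK α) β) :=
      hc_uniq _ _ (hH' α β).symm
    rw [h1, hH0]
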